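/- Let G be a group acting on a simplicial set X by simplicial automorphisms such that the action on Xₘ is free for every m, and let q : X → X/G be the degreewise quotient map. Then there exist a G-equivariant simplicial map c̃ : X → E G and a simplicial map c : X/G → B G such that the square with top map c̃ : X → E G, left map q : X → X/G, right map the quotient projection E G → B G, and bottom map c : X/G → B G commutes and is a pullback square in the category of simplicial sets. -/

import Mathlib

open CategoryTheory Simplicial Opposite

/-- An action of a group `G` on a simplicial set `X` by simplicial automorphisms. -/
structure SSetAction (G : Type) [Group G] (X : SSet.{0}) where
  smul : ∀ ⦃m : SimplexCategoryᵒᵖ⦄, G → X.obj m → X.obj m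
  one_smul : ∀ ⦃m : SimplexCategoryᵒᵖ⦄ (x : X.obj m), smul 1 x = x
  mul_smul : ∀ ⦃m : SimplexCategoryᵒᵖ⦄ (g h : G) (x : X.obj m),
    smul (g * h) x = smul g (smul h x)
  map_smul : ∀ ⦃m m' : SimplexCategoryᵒᵖ⦄ (f : m ⟶ m') (g : G) (x : X.obj m),
    X.map f (smul g x) = smul g (X.map f x)

namespace SSetAction

variable {G : Type} [Group G] {X : SSet.{0}} (σ : SSetAction G X)

/-- The orbit relation of the action, in each simplicial degree. -/
def rel (m : SimplexCategoryᵒᵖ) (x y : X.obj m) : Prop := ∃ g : G, σ.smul g x = y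

/-- The degreewise quotient simplicial set `X/G`. -/
def quotient : SSet.{0} where
  obj m := Quot (σ.rel m)
  map f := TypeCat.ofHom (Quot.lift (fun x => Quot.mk (σ.rel _) (X.map f x))
    (fun x y ⟨g, hg⟩ => Quot.sound ⟨g, by rw [← σ.map_smul, hg]⟩))
  map_id m := by
    ext x
    induction x using Quot.ind
    simp [FunctorToTypes.map_id_apply]
  map_comp f g := by
    ext x
    induction x using Quot.ind
    simp [FunctorToTypes.map_comp_apply]

/-- The quotient map of simplicial sets `X ⟶ X/G`. -/
def quotientHom : X ⟶ σ.quotient where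
  app m := TypeCat.ofHom (fun x => Quot.mk _ x)
  naturality _ _ f := rfl

end SSetAction

/-- The simplicial set `E G`: its `n`-simplices are `G^{n+1}`, with faces deleting
coordinates and degeneracies repeating coordinates. -/
def ESet (G : Type) : SSet.{0} where
  obj m := Fin (m.unop.len + 1) → G
  map f := TypeCat.ofHom (fun x => x ∘ f.unop.toOrderHom)
  map_id m := by ext x; rfl
  map_comp f g := by ext x; rfl

/-- The diagonal action of `G` on `E G` by left multiplication. -/
def EAction (G : Type) [Group G] : SSetAction G (ESet G) where
  smul m g x := fun i => g * (show Fin (m.unop.len + 1) → G from x) i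
  one_smul m x := by funext i; exact one_mul _
  mul_smul m g h x := by funext i; exact mul_assoc _ _ _
  map_smul m m' f g x := rfl


namespace SSetAction

variable {G : Type} [Group G] {X : SSet.{0}} (σ : SSetAction G X)

lemma rel_of_quot_eq {m : SimplexCategoryᵒᵖ} {x y : X.obj m}
    (h : Quot.mk (σ.rel m) x = Quot.mk (σ.rel m) y) : σ.rel m x y := by
  have h' := Quot.eq.mp h
  clear h
  induction h' with
  | rel a b hab => exact hab
  | refl a => exact ⟨1, σ.one_smul a⟩
  | symm a b _ ih =>
    obtain ⟨g, hg⟩ := ih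
    exact ⟨g⁻¹, by rw [← hg, ← σ.mul_smul, inv_mul_cancel, σ.one_smul]⟩
  | trans a b c _ _ ih1 ih2 =>
    obtain ⟨g, hg⟩ := ih1
    obtain ⟨h', hh⟩ := ih2
    exact ⟨h' * g, by rw [σ.mul_smul, hg, hh]⟩

end SSetAction

/-- If `G` acts freely on a simplicial set `X` in every degree, then there
are a `G`-equivariant simplicial map `c̃ : X ⟶ E G` and a simplicial map
`c : X/G ⟶ B G = (E G)/G` forming a commuting square with the quotient maps which is a
pullback square in the category of simplicial sets. -/
theorem free_quotient_classifying_pullback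
    (G : Type) [Group G] (X : SSet.{0}) (σ : SSetAction G X)
    (hfree : ∀ (m : SimplexCategoryᵒᵖ) (g : G), g ≠ 1 → ∀ x : X.obj m, σ.smul g x ≠ x) :
    ∃ (ct : X ⟶ ESet G) (c : σ.quotient ⟶ (EAction G).quotient),
      (∀ (m : SimplexCategoryᵒᵖ) (g : G) (x : X.obj m),
        ct.app m (σ.smul g x) = (EAction G).smul g (ct.app m x)) ∧
      IsPullback ct σ.quotientHom (EAction G).quotientHom c := by
  classical
  -- uniqueness of the group element moving a simplex, from freeness
  have huniq : ∀ (m : SimplexCategoryᵒᵖ) (g g' : G) (x : X.obj m),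
      σ.smul g x = σ.smul g' x → g = g' := by
    intro m g g' x h
    by_contra hne
    refine hfree m (g'⁻¹ * g) (fun h1 => hne ?_) x ?_
    · have := congrArg (g' * ·) h1
      simpa [mul_assoc] using this
    · rw [σ.mul_smul, h, ← σ.mul_smul, inv_mul_cancel, σ.one_smul]
  -- the labelling function on vertices
  set rep : X.obj (op ⦋0⦌) → X.obj (op ⦋0⦌) :=
    fun x => (Quot.mk (σ.rel (op ⦋0⦌)) x).out with hrep_def
  have hrep : ∀ x : X.obj (op ⦋0⦌), ∃ g : G, σ.smul g (rep x) = x := by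
    intro x
    exact σ.rel_of_quot_eq ((Quot.mk (σ.rel (op ⦋0⦌)) x).out_eq)
  let v : X.obj (op ⦋0⦌) → G := fun x => (hrep x).choose
  have hv : ∀ x, σ.smul (v x) (rep x) = x := fun x => (hrep x).choose_spec
  have hrep_smul : ∀ (g : G) (x : X.obj (op ⦋0⦌)), rep (σ.smul g x) = rep x := by
    intro g x
    have : Quot.mk (σ.rel (op ⦋0⦌)) (σ.smul g x) = Quot.mk (σ.rel (op ⦋0⦌)) x :=
      (Quot.sound ⟨g, rfl⟩).symm
    simp only [hrep_def, this]
  have hv_smul : ∀ (g : G) (x : X.obj (op ⦋0⦌)), v (σ.smul g x) = g * v x := by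
    intro g x
    apply huniq (op ⦋0⦌) _ _ (rep x)
    conv_lhs => rw [← hrep_smul g x, hv]
    rw [σ.mul_smul, hv]
  -- the classifying map ct : X ⟶ E G
  let ct : X ⟶ ESet G :=
    { app := fun m => TypeCat.ofHom (fun x => fun i =>
        v (X.map (SimplexCategory.const (SimplexCategory.mk 0) m.unop i).op x))
      naturality := by
        intro m m' f
        ext x
        refine funext fun i => ?_
        exact congrArg v ((FunctorToTypes.map_comp_apply X f
          (SimplexCategory.const (SimplexCategory.mk 0) m'.unop i).op x).symm) }
  have hct : ∀ (m : SimplexCategoryᵒᵖ) (g : G) (x : X.obj m),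
      ct.app m (σ.smul g x) = (EAction G).smul g (ct.app m x) := by
    intro m g x
    refine funext fun i => ?_
    show v (X.map _ (σ.smul g x)) = g * v (X.map _ x)
    rw [σ.map_smul, hv_smul]
  -- the induced map on quotients
  let c : σ.quotient ⟶ (EAction G).quotient :=
    { app := fun m => TypeCat.ofHom (Quot.lift (fun x => Quot.mk _ (ct.app m x))
        (fun x y ⟨g, hg⟩ => Quot.sound ⟨g, by rw [← hct, hg]⟩))
      naturality := by
        intro m m' f
        ext x
        induction x using Quot.ind with
        | _ x =>
          exact congrArg (Quot.mk _) (FunctorToTypes.naturality ct f x) }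
  have comm : CommSq ct σ.quotientHom (EAction G).quotientHom c := by
    constructor
    apply NatTrans.ext
    funext m
    ext x
    rfl
  -- key injectivity
  have hkey : ∀ (m : SimplexCategoryᵒᵖ) (x y : X.obj m),
      ct.app m x = ct.app m y →
      Quot.mk (σ.rel m) x = Quot.mk (σ.rel m) y → x = y := by
    intro m x y hcteq hq
    obtain ⟨g, hg⟩ := σ.rel_of_quot_eq hq
    have : ct.app m (σ.smul g x) = ct.app m x := by rw [hg, hcteq]
    rw [hct] at this
    have hg1 : g * (ct.app m x 0) = ct.app m x 0 := congrFun this 0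
    have hg2 : g * ct.app m x 0 = 1 * ct.app m x 0 := by rw [hg1, one_mul]
    have : g = 1 := mul_right_cancel hg2
    rw [← hg, this, σ.one_smul]
  refine ⟨ct, c, hct, IsPullback.of_isLimit' comm ?_⟩
  -- existence of unique lifts, levelwise
  have hexists : ∀ (s : Limits.PullbackCone (EAction G).quotientHom c)
      (m : SimplexCategoryᵒᵖ) (w : s.pt.obj m),
      ∃ x : X.obj m, Quot.mk (σ.rel m) x = s.snd.app m w ∧ ct.app m x = s.fst.app m w := by
    intro s m w
    obtain ⟨x₀, hx₀⟩ := Quot.exists_rep (s.snd.app m w)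
    have hcond : Quot.mk ((EAction G).rel m) (s.fst.app m w) = c.app m (s.snd.app m w) :=
      congrArg (fun φ => (φ.app m) w) s.condition
    rw [← hx₀] at hcond
    obtain ⟨g, hg⟩ := (EAction G).rel_of_quot_eq hcond.symm
    refine ⟨σ.smul g x₀, ?_, ?_⟩
    · rw [← hx₀]; exact (Quot.sound ⟨g, rfl⟩).symm
    · rw [hct]; exact hg
  apply Limits.PullbackCone.IsLimit.mk comm.w
    (fun s =>
      { app := fun m => TypeCat.ofHom (fun w => (hexists s m w).choose)
        naturality := by
          intro m m' f
          ext w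
          apply hkey
          · calc ct.app m' ((hexists s m' (s.pt.map f w)).choose)
                  = s.fst.app m' (s.pt.map f w) := (hexists s m' (s.pt.map f w)).choose_spec.2
              _ = (ESet G).map f (s.fst.app m w) := (FunctorToTypes.naturality s.fst f w)
              _ = (ESet G).map f (ct.app m ((hexists s m w).choose)) := by
                    rw [(hexists s m w).choose_spec.2]
              _ = ct.app m' (X.map f ((hexists s m w).choose)) :=
                    (FunctorToTypes.naturality ct f _).symm
          · exact (hexists s m' (s.pt.map f w)).choose_spec.1.trans
              ((FunctorToTypes.naturality s.snd f w).trans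
                (congrArg (fun q => σ.quotient.map f q) (hexists s m w).choose_spec.1.symm)) })
  · intro s
    apply NatTrans.ext
    funext m
    ext w
    exact (hexists s m w).choose_spec.2
  · intro s
    apply NatTrans.ext
    funext m
    ext w
    exact (hexists s m w).choose_spec.1
  · intro s m' hfst hsnd
    apply NatTrans.ext
    funext m
    ext w
    apply hkey
    · exact (congrArg (fun φ => (φ.app m) w) hfst).trans (hexists s m w).choose_spec.2.symm
    · exact (congrArg (fun φ => (φ.app m) w) hsnd).trans (hexists s m w).choose_spec.1.symm
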